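/- For any 2×2 block matrix C = [[C_0, C_1],[C_1†, C_0]] with equal diagonal blocks, the partial transpose of C (transpose on the second tensor factor, viewing C as acting on C²⊗C^d) has the same spectrum as C; consequently, if C is positive semidefinite then C has positive partial transpose and represents a separable (PPT) state. -/

import Mathlib

open Matrix
open scoped Kronecker ComplexOrder

noncomputable section

/-- The Schur-product (Hadamard-product) superoperator `X ↦ X ∘ C`. -/
def schurMap {d : ℕ} (C : Matrix (Fin d) (Fin d) ℂ) :
    Matrix (Fin d) (Fin d) ℂ →ₗ[ℂ] Matrix (Fin d) (Fin d) ℂ where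
  toFun X := X.hadamard C
  map_add' X Y := by ext i j; simp [Matrix.hadamard]; ring
  map_smul' c X := by ext i j; simp [Matrix.hadamard]; ring

/-- The extension `E ⊗ I_n` of a superoperator, applied to a bipartite matrix. -/
def tensExt {d : ℕ} (E : Matrix (Fin d) (Fin d) ℂ →ₗ[ℂ] Matrix (Fin d) (Fin d) ℂ) (n : ℕ)
    (ρ : Matrix (Fin d × Fin n) (Fin d × Fin n) ℂ) :
    Matrix (Fin d × Fin n) (Fin d × Fin n) ℂ :=
  Matrix.of fun p q => ∑ i, ∑ j, (E (Matrix.single i j 1)) p.1 q.1 * ρ (i, p.2) (j, q.2)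

/-- Complete positivity: every extension `E ⊗ I_n` preserves positive semidefiniteness. -/
def IsCP {d : ℕ} (E : Matrix (Fin d) (Fin d) ℂ →ₗ[ℂ] Matrix (Fin d) (Fin d) ℂ) : Prop :=
  ∀ (n : ℕ) (ρ : Matrix (Fin d × Fin n) (Fin d × Fin n) ℂ),
    ρ.PosSemidef → (tensExt E n ρ).PosSemidef

/-- Trace preservation. -/
def IsTP {d : ℕ} (E : Matrix (Fin d) (Fin d) ℂ →ₗ[ℂ] Matrix (Fin d) (Fin d) ℂ) : Prop :=
  ∀ X, (E X).trace = X.trace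

/-- Quantum channel: completely positive and trace-preserving. -/
def IsCPTP {d : ℕ} (E : Matrix (Fin d) (Fin d) ℂ →ₗ[ℂ] Matrix (Fin d) (Fin d) ℂ) : Prop :=
  IsCP E ∧ IsTP E

/-- The Jamiołkowski matrix `J(E) = (E ⊗ I)(|Ψ⟩⟨Ψ|)`, with entries
`J(E)_{(i,k),(j,l)} = E(|k⟩⟨l|)_{i j} / d`. -/
def jam {d : ℕ} (E : Matrix (Fin d) (Fin d) ℂ →ₗ[ℂ] Matrix (Fin d) (Fin d) ℂ) :
    Matrix (Fin d × Fin d) (Fin d × Fin d) ℂ :=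
  Matrix.of fun p q => (E (Matrix.single p.2 q.2 1)) p.1 q.1 / d

/-- Controlled unitary `U = Σ_i |i⟩⟨i| ⊗ U_i`. -/
def ctrl {d n : ℕ} (Us : Fin d → Matrix (Fin n) (Fin n) ℂ) :
    Matrix (Fin d × Fin n) (Fin d × Fin n) ℂ :=
  Matrix.of fun p q => (if p.1 = q.1 then (1 : ℂ) else 0) * (Us p.1) p.2 q.2


/-- Partial transpose on the second tensor factor (blockwise transpose). -/
def ptrans {a b : Type*} (M : Matrix (a × b) (a × b) ℂ) : Matrix (a × b) (a × b) ℂ :=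
  Matrix.of fun p q => M (p.1, q.2) (q.1, p.2)

/-- Separability of a bipartite matrix: a finite sum of Kronecker products of
positive semidefinite matrices. -/
def Separable {a b : Type*} [Fintype a] [Fintype b] [DecidableEq a] [DecidableEq b]
    (M : Matrix (a × b) (a × b) ℂ) : Prop :=
  ∃ (k : ℕ) (A : Fin k → Matrix a a ℂ) (B : Fin k → Matrix b b ℂ),
    (∀ t, (A t).PosSemidef) ∧ (∀ t, (B t).PosSemidef) ∧ M = ∑ t, A t ⊗ₖ B t

/-- The 2×2 block matrix `[[C0, C1], [C1ᴴ, C0]]` with equal diagonal blocks. -/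
def blockC {d : ℕ} (C0 C1 : Matrix (Fin d) (Fin d) ℂ) :
    Matrix (Fin 2 × Fin d) (Fin 2 × Fin d) ℂ :=
  Matrix.of fun p q =>
    (if p.1 = q.1 then C0 else if p.1 = 0 then C1 else C1ᴴ) p.2 q.2



/- ### Auxiliary machinery -/

open scoped Matrix.Norms.L2Operator in
noncomputable instance matrixCStarAlg (m : Type*) [Fintype m] [DecidableEq m] :
    CStarAlgebra (Matrix m m ℂ) := { }

lemma unitary_spectral {m : Type*} [Fintype m] [DecidableEq m]
    (U : Matrix m m ℂ) (hU : U ∈ Matrix.unitaryGroup m ℂ) :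
    ∃ (S : Finset ℂ) (P : ℂ → Matrix m m ℂ),
      (∀ μ ∈ S, (P μ).PosSemidef) ∧ (∀ μ ∈ S, star μ * μ = 1) ∧
      (∑ μ ∈ S, P μ) = 1 ∧ (∑ μ ∈ S, μ • P μ) = U := by
  have hsUU : star U * U = 1 := Unitary.star_mul_self_of_mem hU
  have hUsU : U * star U = 1 := Unitary.mul_star_self_of_mem hU
  haveI hnorm : IsStarNormal U := ⟨by rw [Commute, SemiconjBy, hsUU, hUsU]⟩
  have hfin : (spectrum ℂ U).Finite := Matrix.finite_spectrum U
  have hcont : ∀ f : ℂ → ℂ, ContinuousOn f (spectrum ℂ U) := by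
    intro f
    haveI : Finite (spectrum ℂ U) := hfin.to_subtype
    rw [continuousOn_iff_continuous_restrict]
    exact continuous_of_discreteTopology
  set S : Finset ℂ := hfin.toFinset with hS
  set P : ℂ → Matrix m m ℂ := fun μ => cfc (fun z : ℂ => if z = μ then (1:ℂ) else 0) U with hP
  have hidem : ∀ μ, P μ * P μ = P μ := by
    intro μ
    rw [hP, ← cfc_mul _ _ U (hcont _) (hcont _)]
    exact cfc_congr fun z _ => by by_cases h : z = μ <;> simp [h]
  have hstar : ∀ μ, (P μ)ᴴ = P μ := by
    intro μ
    have := cfc_star (fun z : ℂ => if z = μ then (1:ℂ) else 0) U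
    have h2 : (fun z : ℂ => star (if z = μ then (1:ℂ) else 0)) =
        (fun z : ℂ => if z = μ then (1:ℂ) else 0) := by
      funext z; by_cases h : z = μ <;> simp [h]
    rw [h2] at this
    exact this.symm
  refine ⟨S, P, ?_, ?_, ?_, ?_⟩
  · intro μ _
    have : P μ = (P μ)ᴴ * P μ := by rw [hstar, hidem]
    rw [this]
    exact Matrix.posSemidef_conjTranspose_mul_self _
  · intro μ hμ
    have hμs : μ ∈ spectrum ℂ U := by rwa [hS, Set.Finite.mem_toFinset] at hμ
    have := spectrum.subset_circle_of_unitary hU hμs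
    have hn : ‖μ‖ = 1 := by simpa [Metric.mem_sphere, dist_zero_right] using this
    calc star μ * μ = (‖μ‖ : ℂ) ^ 2 := by
          rw [mul_comm, Complex.star_def, Complex.mul_conj']
        _ = 1 := by rw [hn]; norm_num
  · rw [hP, ← cfc_sum _ U S (fun _ _ => hcont _)]
    rw [← cfc_one (R := ℂ) U]
    apply cfc_congr
    intro z hz
    have hzS : z ∈ S := by rwa [hS, Set.Finite.mem_toFinset]
    simp only [Finset.sum_apply]
    rw [Finset.sum_eq_single z (fun b _ hb => by simp [Ne.symm hb]) (fun h => absurd hzS h)]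
    simp
  · have : ∀ μ, μ • P μ = cfc (fun z : ℂ => μ * (if z = μ then (1:ℂ) else 0)) U := by
      intro μ
      rw [hP, ← cfc_smul μ _ U (hcont _)]
      simp [smul_eq_mul]
    simp_rw [this]
    rw [← cfc_sum _ U S (fun _ _ => hcont _)]
    have : cfc (∑ i ∈ S, fun z : ℂ => i * if z = i then (1:ℂ) else 0) U = cfc (id : ℂ → ℂ) U := by
      apply cfc_congr
      intro z hz
      have hzS : z ∈ S := by rwa [hS, Set.Finite.mem_toFinset]
      simp only [Finset.sum_apply, id]
      rw [Finset.sum_eq_single z (fun b _ hb => by simp [Ne.symm hb]) (fun h => absurd hzS h)]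
      simp
    rw [this]
    exact cfc_id ℂ U

lemma gram_unitary {m n : Type*} [Fintype m] [DecidableEq m] [Fintype n] [DecidableEq n]
    (X Y : Matrix m n ℂ) (h : Xᴴ * X = Yᴴ * Y) :
    ∃ U : Matrix m m ℂ, U ∈ Matrix.unitaryGroup m ℂ ∧ Y = U * X := by
  classical
  set f : EuclideanSpace ℂ n →ₗ[ℂ] EuclideanSpace ℂ m := Matrix.toEuclideanLin X with hf
  set g : EuclideanSpace ℂ n →ₗ[ℂ] EuclideanSpace ℂ m := Matrix.toEuclideanLin Y with hg
  have comp : ∀ Z : Matrix m n ℂ, Matrix.toEuclideanLin (Zᴴ * Z) =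
      (Matrix.toEuclideanLin Zᴴ) ∘ₗ (Matrix.toEuclideanLin Z) := by
    intro Z
    simp only [Matrix.toEuclideanLin_eq_toLin]
    exact Matrix.toLin_mul _ _ _ _ _
  have key : ∀ (Z : Matrix m n ℂ) (a b : EuclideanSpace ℂ n),
      (inner ℂ (Matrix.toEuclideanLin Z a) (Matrix.toEuclideanLin Z b) : ℂ) =
        inner ℂ a (Matrix.toEuclideanLin (Zᴴ * Z) b) := by
    intro Z a b
    rw [comp, LinearMap.comp_apply, Matrix.toEuclideanLin_conjTranspose_eq_adjoint,
      LinearMap.adjoint_inner_right]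
  have key2 : ∀ a b, (inner ℂ (f a) (f b) : ℂ) = inner ℂ (g a) (g b) := by
    intro a b; rw [hf, hg, key, key, h]
  have hnorm : ∀ a, ‖f a‖ = ‖g a‖ := by
    intro a
    have h1 := key2 a a
    rw [inner_self_eq_norm_sq_to_K (𝕜 := ℂ), inner_self_eq_norm_sq_to_K (𝕜 := ℂ)] at h1
    have h2 : (‖f a‖ : ℝ) ^ 2 = ‖g a‖ ^ 2 := by exact_mod_cast h1
    exact (sq_eq_sq₀ (norm_nonneg _) (norm_nonneg _)).mp h2
  have hker : LinearMap.ker f ≤ LinearMap.ker g := by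
    intro a ha
    rw [LinearMap.mem_ker] at ha ⊢
    have := hnorm a
    rw [ha, norm_zero] at this
    exact norm_eq_zero.mp this.symm
  set gbar : (EuclideanSpace ℂ n ⧸ LinearMap.ker f) →ₗ[ℂ] EuclideanSpace ℂ m :=
    (LinearMap.ker f).liftQ g hker with hgbar
  set e := f.quotKerEquivRange with he
  set L0 : (LinearMap.range f) →ₗ[ℂ] EuclideanSpace ℂ m :=
    gbar ∘ₗ (e.symm : LinearMap.range f →ₗ[ℂ] _) with hL0
  have hL0app : ∀ a : EuclideanSpace ℂ n,
      L0 ⟨f a, LinearMap.mem_range_self f a⟩ = g a := by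
    intro a
    rw [hL0]
    simp only [LinearMap.comp_apply, LinearEquiv.coe_coe]
    rw [he, f.quotKerEquivRange_symm_apply_image a]
    rw [hgbar]
    exact Submodule.liftQ_apply _ g a  -- mkQ a -> g a ; check
  have hL0norm : ∀ s : LinearMap.range f, ‖L0 s‖ = ‖s‖ := by
    rintro ⟨v, hv⟩
    obtain ⟨a, ha⟩ := hv
    have hs : (⟨v, ⟨a, ha⟩⟩ : LinearMap.range f) = ⟨f a, LinearMap.mem_range_self f a⟩ :=
      Subtype.ext ha.symm
    rw [hs, hL0app]
    have : ‖(⟨f a, LinearMap.mem_range_self f a⟩ : LinearMap.range f)‖ = ‖f a‖ := rfl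
    rw [this, hnorm]
  set L : (LinearMap.range f) →ₗᵢ[ℂ] EuclideanSpace ℂ m := ⟨L0, hL0norm⟩ with hLdef
  set Uiso := L.extend with hUiso
  have hUapp : ∀ a : EuclideanSpace ℂ n, Uiso (f a) = g a := by
    intro a
    have := L.extend_apply ⟨f a, LinearMap.mem_range_self f a⟩
    rw [hUiso]
    --  Uiso (f a) : need coe
    have hcoe : ((⟨f a, LinearMap.mem_range_self f a⟩ : LinearMap.range f) : EuclideanSpace ℂ m) = f a := rfl
    rw [← hcoe, this, hLdef]
    exact hL0app a
  set U : Matrix m m ℂ :=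
    Matrix.of (fun k i => Uiso (EuclideanSpace.single i (1:ℂ)) k) with hUdef
  have hdecomp : ∀ v : EuclideanSpace ℂ m,
      ∑ i, v i • EuclideanSpace.single i (1:ℂ) = v := by
    intro v
    have := (EuclideanSpace.basisFun m ℂ).sum_repr v
    simpa [EuclideanSpace.basisFun_repr, EuclideanSpace.basisFun_apply] using this
  have hsum_apply : ∀ (w : m → EuclideanSpace ℂ m) (k : m),
      (∑ i, w i) k = ∑ i, w i k := by
    intro w k
    rw [WithLp.ofLp_sum, Finset.sum_apply]
  have hmulVec : ∀ v : EuclideanSpace ℂ m, U.mulVec v = Uiso v := by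
    intro v
    have h1 : Uiso v = ∑ i, v i • Uiso (EuclideanSpace.single i (1:ℂ)) := by
      conv_lhs => rw [← hdecomp v]
      rw [map_sum]
      exact Finset.sum_congr rfl fun i _ => Uiso.map_smul (v i) _
    funext k
    rw [h1, hsum_apply]
    simp only [Matrix.mulVec, dotProduct, hUdef, Matrix.of_apply, PiLp.smul_apply,
      smul_eq_mul]
    exact Finset.sum_congr rfl fun i _ => mul_comm _ _
  have hUnit : U ∈ Matrix.unitaryGroup m ℂ := by
    rw [Matrix.mem_unitaryGroup_iff']
    ext i j
    have hinner := Uiso.inner_map_map (EuclideanSpace.single i (1:ℂ)) (EuclideanSpace.single j (1:ℂ))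
    rw [EuclideanSpace.inner_single_left] at hinner
    simp only [_root_.map_one, one_mul] at hinner
    have lhs_eq : (star U * U) i j =
        (inner ℂ (Uiso (EuclideanSpace.single i (1:ℂ))) (Uiso (EuclideanSpace.single j (1:ℂ))) : ℂ) := by
      rw [Matrix.mul_apply, PiLp.inner_apply]
      apply Finset.sum_congr rfl
      intro k _
      simp only [Matrix.star_apply, hUdef, Matrix.of_apply, RCLike.inner_apply]
      exact mul_comm _ _
    rw [lhs_eq, hinner]
    simp only [EuclideanSpace.single_apply, Matrix.one_apply]
  refine ⟨U, hUnit, ?_⟩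
  have hlin : Matrix.toEuclideanLin Y = Matrix.toEuclideanLin (U * X) := by
    have hcomp2 : Matrix.toEuclideanLin (U * X) =
        (Matrix.toEuclideanLin U) ∘ₗ (Matrix.toEuclideanLin X) := by
      simp only [Matrix.toEuclideanLin_eq_toLin]
      exact Matrix.toLin_mul _ _ _ _ _
    rw [hcomp2]
    apply LinearMap.ext
    intro a
    rw [LinearMap.comp_apply]
    have h1 : Matrix.toEuclideanLin U (f a) = Uiso (f a) := by
      have h2 := Matrix.toEuclideanLin_apply U (f a)
      rw [h2, hmulVec]
    show (g a : EuclideanSpace ℂ m) = Matrix.toEuclideanLin U (f a)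
    rw [h1, hUapp]
  exact Matrix.toEuclideanLin.injective hlin

lemma blockC_separable {d : ℕ} (C0 C1 : Matrix (Fin d) (Fin d) ℂ)
    (hM : (blockC C0 C1).PosSemidef) : Separable (blockC C0 C1) := by
  classical
  obtain ⟨N, hN⟩ : ∃ N : Matrix (Fin 2 × Fin d) (Fin 2 × Fin d) ℂ, blockC C0 C1 = Nᴴ * N := by
    open scoped MatrixOrder in
    exact ⟨CFC.sqrt (blockC C0 C1), by
      rw [show (CFC.sqrt (blockC C0 C1))ᴴ = CFC.sqrt (blockC C0 C1) from
        (CFC.sqrt_nonneg (blockC C0 C1)).isSelfAdjoint.star_eq,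
        CFC.sqrt_mul_sqrt_self (blockC C0 C1) hM.nonneg]⟩
  set X : Matrix (Fin 2 × Fin d) (Fin d) ℂ := Matrix.of (fun r j => N r (0, j)) with hX
  set Y : Matrix (Fin 2 × Fin d) (Fin d) ℂ := Matrix.of (fun r j => N r (1, j)) with hY
  have hent : ∀ p q, blockC C0 C1 p q = ∑ r, star (N r p) * N r q := by
    intro p q
    rw [hN, Matrix.mul_apply]
    simp [Matrix.conjTranspose_apply]
  have hXX : Xᴴ * X = C0 := by
    ext j j'
    rw [Matrix.mul_apply]
    have := (hent (0, j) (0, j')).symm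
    simpa [blockC, Matrix.conjTranspose_apply, hX] using this
  have hYY : Yᴴ * Y = C0 := by
    ext j j'
    rw [Matrix.mul_apply]
    have := (hent (1, j) (1, j')).symm
    simpa [blockC, Matrix.conjTranspose_apply, hY] using this
  have hXY : Xᴴ * Y = C1 := by
    ext j j'
    rw [Matrix.mul_apply]
    have := (hent (0, j) (1, j')).symm
    simpa [blockC, Matrix.conjTranspose_apply, hX, hY] using this
  obtain ⟨U, hUmem, hYU⟩ := gram_unitary X Y (hXX.trans hYY.symm)
  obtain ⟨S, P, hPSD, hmod, hsum1, hsumU⟩ := unitary_spectral U hUmem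
  -- matrix-level identities
  have hB0 : ∑ μ ∈ S, Xᴴ * P μ * X = C0 := by
    have h1 : Xᴴ * (∑ μ ∈ S, P μ) * X = ∑ μ ∈ S, Xᴴ * P μ * X := by
      rw [Matrix.mul_sum, Matrix.sum_mul]
    rw [← h1, hsum1, Matrix.mul_one, hXX]
  have hB1 : ∑ μ ∈ S, μ • (Xᴴ * P μ * X) = C1 := by
    have h1 : Xᴴ * (∑ μ ∈ S, μ • P μ) * X = ∑ μ ∈ S, μ • (Xᴴ * P μ * X) := by
      rw [Matrix.mul_sum, Matrix.sum_mul]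
      exact Finset.sum_congr rfl fun μ _ => by rw [Matrix.mul_smul, Matrix.smul_mul]
    rw [← h1, hsumU, Matrix.mul_assoc, ← hYU, hXY]
  have hherm : ∀ μ ∈ S, (Xᴴ * P μ * X)ᴴ = Xᴴ * P μ * X := by
    intro μ hμ
    rw [Matrix.conjTranspose_mul, Matrix.conjTranspose_mul, Matrix.conjTranspose_conjTranspose,
      (hPSD μ hμ).1.eq, Matrix.mul_assoc]
  have hB2 : ∑ μ ∈ S, (star μ) • (Xᴴ * P μ * X) = C1ᴴ := by
    rw [← hB1, Matrix.conjTranspose_sum]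
    apply Finset.sum_congr rfl
    intro μ hμ
    rw [Matrix.conjTranspose_smul, hherm μ hμ]
  -- index by Fin S.card
  set k := S.card with hk
  set idx : Fin k → ℂ := fun t => ((S.equivFin.symm t : S) : ℂ) with hidx
  set v : ℂ → (Fin 2 → ℂ) := fun μ => ![1, star μ] with hv
  set A : ℂ → Matrix (Fin 2) (Fin 2) ℂ :=
    fun μ => Matrix.of (fun i i' => v μ i * star (v μ i')) with hA
  refine ⟨k, fun t => A (idx t), fun t => Xᴴ * P (idx t) * X, ?_, ?_, ?_⟩
  · intro t
    show (A (idx t)).PosSemidef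
    set w : Matrix (Fin 1) (Fin 2) ℂ := Matrix.of (fun _ i => star (v (idx t) i)) with hw
    have : A (idx t) = wᴴ * w := by
      ext i i'
      rw [Matrix.mul_apply]
      simp [hw, hA, Matrix.conjTranspose_apply]
    rw [this]
    exact Matrix.posSemidef_conjTranspose_mul_self w
  · intro t
    show (Xᴴ * P (idx t) * X).PosSemidef
    have hmem : idx t ∈ S := (S.equivFin.symm t).2
    exact (hPSD _ hmem).conjTranspose_mul_mul_same X
  · show blockC C0 C1 = ∑ t, A (idx t) ⊗ₖ (Xᴴ * P (idx t) * X)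
    have hreindex : ∑ t, A (idx t) ⊗ₖ (Xᴴ * P (idx t) * X) =
        ∑ μ ∈ S, A μ ⊗ₖ (Xᴴ * P μ * X) := by
      rw [← Finset.sum_coe_sort S (fun μ => A μ ⊗ₖ (Xᴴ * P μ * X))]
      exact Equiv.sum_comp S.equivFin.symm (fun x : S => A (x : ℂ) ⊗ₖ (Xᴴ * P (x : ℂ) * X))
    rw [hreindex]
    ext ⟨i, j⟩ ⟨i', j'⟩
    rw [Matrix.sum_apply]
    simp only [Matrix.kroneckerMap_apply]
    fin_cases i <;> fin_cases i'
    · -- (0,0) : C0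
      show blockC C0 C1 ((0:Fin 2), j) ((0:Fin 2), j') = _
      have h00 : blockC C0 C1 ((0:Fin 2), j) ((0:Fin 2), j') = C0 j j' := by simp [blockC]
      rw [h00, ← hB0, Matrix.sum_apply]
      refine Finset.sum_congr rfl fun μ _ => ?_
      simp [hA, hv]
    · -- (0,1) : C1
      show blockC C0 C1 ((0:Fin 2), j) ((1:Fin 2), j') = _
      have h01 : blockC C0 C1 ((0:Fin 2), j) ((1:Fin 2), j') = C1 j j' := by
        simp [blockC]
      rw [h01, ← hB1, Matrix.sum_apply]
      refine Finset.sum_congr rfl fun μ _ => ?_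
      simp [hA, hv, Matrix.smul_apply, smul_eq_mul]
    · -- (1,0) : C1ᴴ
      show blockC C0 C1 ((1:Fin 2), j) ((0:Fin 2), j') = _
      have h10 : blockC C0 C1 ((1:Fin 2), j) ((0:Fin 2), j') = C1ᴴ j j' := by
        simp [blockC]
      rw [h10, ← hB2, Matrix.sum_apply]
      refine Finset.sum_congr rfl fun μ _ => ?_
      simp [hA, hv, Matrix.smul_apply, smul_eq_mul]
    · -- (1,1) : C0
      show blockC C0 C1 ((1:Fin 2), j) ((1:Fin 2), j') = _
      have h11 : blockC C0 C1 ((1:Fin 2), j) ((1:Fin 2), j') = C0 j j' := by simp [blockC]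
      rw [h11, ← hB0, Matrix.sum_apply]
      refine Finset.sum_congr rfl fun μ hμ => ?_
      simp only [hA, hv, Matrix.of_apply, Fin.mk_one, Matrix.cons_val_one, Matrix.head_cons,
        Matrix.cons_val_zero, star_star]
      rw [hmod μ hμ, one_mul]

def swapE (d : ℕ) : (Fin 2 × Fin d) ≃ (Fin 2 × Fin d) :=
  Equiv.prodCongr (Equiv.swap 0 1) (Equiv.refl (Fin d))

lemma ptrans_blockC {d : ℕ} (C0 C1 : Matrix (Fin d) (Fin d) ℂ) :
    ptrans (blockC C0 C1) = ((blockC C0 C1)ᵀ).submatrix (swapE d) (swapE d) := by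
  ext ⟨i, j⟩ ⟨i', j'⟩
  fin_cases i <;> fin_cases i' <;>
    simp [ptrans, blockC, swapE, Equiv.swap_apply_left, Equiv.swap_apply_right]

lemma spectrum_transpose {n : Type*} [Fintype n] [DecidableEq n] (M : Matrix n n ℂ) :
    spectrum ℂ Mᵀ = spectrum ℂ M := by
  ext μ
  simp only [spectrum.mem_iff]
  have : algebraMap ℂ (Matrix n n ℂ) μ - Mᵀ = (algebraMap ℂ (Matrix n n ℂ) μ - M)ᵀ := by
    rw [transpose_sub]
    congr 1
    simp [Matrix.algebraMap_eq_diagonal, Matrix.diagonal_transpose]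
  rw [this, Matrix.isUnit_transpose]

lemma spectrum_submatrix {n m : Type*} [Fintype n] [DecidableEq n] [Fintype m] [DecidableEq m]
    (M : Matrix n n ℂ) (e : m ≃ n) :
    spectrum ℂ (M.submatrix e e) = spectrum ℂ M := by
  have : M.submatrix e e = Matrix.reindexAlgEquiv ℂ ℂ e.symm M := by
    simp [Matrix.reindexAlgEquiv_apply, Matrix.reindex_apply]
  rw [this, AlgEquiv.spectrum_eq]


/-- for a Hermitian 2×2 block matrix with equal diagonal blocks, the
partial transpose has the same spectrum; hence if it is PSD it has positive partial
transpose and represents a separable (PPT) state. -/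
theorem stmt12 (d : ℕ) (C0 C1 : Matrix (Fin d) (Fin d) ℂ) (hC0 : C0.IsHermitian) :
    spectrum ℂ (ptrans (blockC C0 C1)) = spectrum ℂ (blockC C0 C1) ∧
    ((blockC C0 C1).PosSemidef →
      (ptrans (blockC C0 C1)).PosSemidef ∧ Separable (blockC C0 C1)) := by
  refine ⟨?_, fun h => ⟨?_, blockC_separable C0 C1 h⟩⟩
  · rw [ptrans_blockC, spectrum_submatrix, spectrum_transpose]
  · rw [ptrans_blockC]
    exact (Matrix.posSemidef_submatrix_equiv (swapE d)).mpr h.transpose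

end
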